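/- Assume max{δ, ν} < 1/4 and let M ∈ Ŵ ∩ S satisfy λ_1(M) = ‖M‖, λ_1(M) > λ_2(M), and the first-order stationarity condition u_1(M)^T X u_1(M) = λ_1(M)·⟨X, M⟩ for every X ∈ Ŵ. Then the smallest eigenvalue satisfies λ_d(M) ≥ −2δ/λ_1(M) − 8δ − 4ν. -/

import Mathlib

open Matrix

noncomputable def vnorm {d : ℕ} (v : Fin d → ℝ) : ℝ := Real.sqrt (∑ i, v i ^ 2)

noncomputable def frobInner {d : ℕ} (M N : Matrix (Fin d) (Fin d) ℝ) : ℝ :=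
  ∑ i, ∑ j, M i j * N i j

noncomputable def frobNorm {d : ℕ} (M : Matrix (Fin d) (Fin d) ℝ) : ℝ :=
  Real.sqrt (frobInner M M)

def IsOrthProjOn {d : ℕ} (V : Submodule ℝ (Matrix (Fin d) (Fin d) ℝ))
    (P : Matrix (Fin d) (Fin d) ℝ →ₗ[ℝ] Matrix (Fin d) (Fin d) ℝ) : Prop :=
  (∀ X, P X ∈ V) ∧ (∀ X ∈ V, P X = X) ∧ ∀ X Y, frobInner (P X) Y = frobInner X (P Y)

noncomputable def hsNorm {d : ℕ}
    (T : Matrix (Fin d) (Fin d) ℝ →ₗ[ℝ] Matrix (Fin d) (Fin d) ℝ) : ℝ :=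
  Real.sqrt (∑ i, ∑ j,
    frobInner (T (Matrix.single i j 1)) (T (Matrix.single i j 1)))

noncomputable def specNorm {d : ℕ} (M : Matrix (Fin d) (Fin d) ℝ) : ℝ :=
  sSup {r : ℝ | ∃ v : Fin d → ℝ, (∑ i, v i ^ 2) = 1 ∧ r = |dotProduct v (M.mulVec v)|}

noncomputable def lamTop {d : ℕ} (M : Matrix (Fin d) (Fin d) ℝ) : ℝ :=
  sSup {r : ℝ | ∃ v : Fin d → ℝ, (∑ i, v i ^ 2) = 1 ∧ r = dotProduct v (M.mulVec v)}

def IsLocMaxSpec {d : ℕ} (V : Submodule ℝ (Matrix (Fin d) (Fin d) ℝ))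
    (M : Matrix (Fin d) (Fin d) ℝ) : Prop :=
  M ∈ V ∧ frobNorm M ≤ 1 ∧
    ∃ ε > 0, ∀ X ∈ V, frobNorm X ≤ 1 → frobNorm (X - M) < ε → specNorm X ≤ specNorm M

namespace SAux
variable {d : ℕ}

noncomputable def phi {d : ℕ} : Matrix (Fin d) (Fin d) ℝ →ₗ[ℝ] EuclideanSpace ℝ (Fin d × Fin d) where
  toFun M := (WithLp.equiv 2 _).symm fun p => M p.1 p.2
  map_add' := by intros; rfl
  map_smul' := by intros; rfl

lemma frob_eq (M N : Matrix (Fin d) (Fin d) ℝ) : frobInner M N = inner ℝ (phi M) (phi N) := by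
  simp [phi, frobInner, PiLp.inner_apply, RCLike.inner_apply, Fintype.sum_prod_type, WithLp.equiv, Equiv.refl_apply]
  exact Finset.sum_congr rfl fun i _ => Finset.sum_congr rfl fun j _ => mul_comm _ _

lemma frobNorm_eq (M : Matrix (Fin d) (Fin d) ℝ) : frobNorm M = ‖phi M‖ := by
  rw [frobNorm, frob_eq, real_inner_self_eq_norm_sq, Real.sqrt_sq (norm_nonneg _)]

lemma frobInner_comm (M N : Matrix (Fin d) (Fin d) ℝ) : frobInner M N = frobInner N M := by
  rw [frob_eq, frob_eq, real_inner_comm]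

lemma frobInner_add_left (X Y Z : Matrix (Fin d) (Fin d) ℝ) :
    frobInner (X + Y) Z = frobInner X Z + frobInner Y Z := by
  simp [frob_eq, map_add, inner_add_left]

lemma frobInner_sub_left (X Y Z : Matrix (Fin d) (Fin d) ℝ) :
    frobInner (X - Y) Z = frobInner X Z - frobInner Y Z := by
  simp [frob_eq, map_sub, inner_sub_left]

lemma frobInner_smul_left (c : ℝ) (X Z : Matrix (Fin d) (Fin d) ℝ) :
    frobInner (c • X) Z = c * frobInner X Z := by
  simp [frob_eq, _root_.map_smul, inner_smul_left]

lemma frobInner_smul_right (c : ℝ) (X Z : Matrix (Fin d) (Fin d) ℝ) :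
    frobInner X (c • Z) = c * frobInner X Z := by
  simp [frob_eq, _root_.map_smul, inner_smul_right]

lemma frobInner_sub_right (X Y Z : Matrix (Fin d) (Fin d) ℝ) :
    frobInner Z (X - Y) = frobInner Z X - frobInner Z Y := by
  simp [frob_eq, map_sub, inner_sub_right]

lemma frobInner_sum_left {ι : Type*} (s : Finset ι) (f : ι → Matrix (Fin d) (Fin d) ℝ)
    (Z : Matrix (Fin d) (Fin d) ℝ) :
    frobInner (∑ i ∈ s, f i) Z = ∑ i ∈ s, frobInner (f i) Z := by
  simp [frob_eq, map_sum, sum_inner]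

lemma abs_frobInner_le (M N : Matrix (Fin d) (Fin d) ℝ) :
    |frobInner M N| ≤ frobNorm M * frobNorm N := by
  rw [frob_eq, frobNorm_eq, frobNorm_eq]; exact abs_real_inner_le_norm _ _

lemma frobNorm_nonneg (M : Matrix (Fin d) (Fin d) ℝ) : 0 ≤ frobNorm M :=
  Real.sqrt_nonneg _

lemma frobNorm_sq (M : Matrix (Fin d) (Fin d) ℝ) : frobNorm M ^ 2 = frobInner M M := by
  rw [frobNorm_eq, frob_eq, real_inner_self_eq_norm_sq]

lemma frobNorm_smul (c : ℝ) (M : Matrix (Fin d) (Fin d) ℝ) :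
    frobNorm (c • M) = |c| * frobNorm M := by
  rw [frobNorm_eq, frobNorm_eq, _root_.map_smul, norm_smul, Real.norm_eq_abs]

lemma frobNorm_add_le (M N : Matrix (Fin d) (Fin d) ℝ) :
    frobNorm (M + N) ≤ frobNorm M + frobNorm N := by
  rw [frobNorm_eq, frobNorm_eq, frobNorm_eq, map_add]; exact norm_add_le _ _

lemma frobNorm_eq_zero {M : Matrix (Fin d) (Fin d) ℝ} (h : frobNorm M = 0) : M = 0 := by
  have h2 : frobInner M M = 0 := by
    have := frobNorm_sq M; rw [h] at this; linarith [this]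
  have : ∀ i j, M i j = 0 := by
    intro i j
    have hnn : ∀ i ∈ Finset.univ, (0:ℝ) ≤ ∑ j, M i j * M i j := by
      intro i _; exact Finset.sum_nonneg fun j _ => mul_self_nonneg _
    have h3 := (Finset.sum_eq_zero_iff_of_nonneg hnn).mp h2 i (Finset.mem_univ i)
    have h4 := (Finset.sum_eq_zero_iff_of_nonneg
      (fun j _ => mul_self_nonneg (M i j))).mp h3 j (Finset.mem_univ j)
    exact mul_self_eq_zero.mp h4
  ext i j; exact this i j

-- vecMulVec lemmas
lemma frobInner_vecMulVec_left (a : Fin d → ℝ) (X : Matrix (Fin d) (Fin d) ℝ) :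
    frobInner (vecMulVec a a) X = dotProduct a (X.mulVec a) := by
  simp only [frobInner, vecMulVec_apply, dotProduct, mulVec, Finset.mul_sum]
  apply Finset.sum_congr rfl; intro i _
  apply Finset.sum_congr rfl; intro j _; ring

lemma frobInner_vecMulVec_vecMulVec (a b : Fin d → ℝ) :
    frobInner (vecMulVec a a) (vecMulVec b b) = (dotProduct a b) ^ 2 := by
  simp only [frobInner, vecMulVec_apply, dotProduct, pow_two, Finset.sum_mul, Finset.mul_sum]
  rw [Finset.sum_congr rfl (fun i _ => Finset.sum_congr rfl (fun j _ => by ring :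
    ∀ j ∈ Finset.univ, a i * a j * (b i * b j) = a i * b i * (a j * b j)))]
  exact Finset.sum_comm

lemma frobNorm_vecMulVec_self {a : Fin d → ℝ} (h : ∑ i, a i ^ 2 = 1) :
    frobNorm (vecMulVec a a) = 1 := by
  rw [frobNorm, frobInner_vecMulVec_vecMulVec]
  have : dotProduct a a = 1 := by
    rw [dotProduct]; rw [← h]; exact Finset.sum_congr rfl fun i _ => (pow_two (a i)).symm
  rw [this]; norm_num

-- projection lemmas
variable {V : Submodule ℝ (Matrix (Fin d) (Fin d) ℝ)}
  {P : Matrix (Fin d) (Fin d) ℝ →ₗ[ℝ] Matrix (Fin d) (Fin d) ℝ}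

lemma proj_inner (hP : IsOrthProjOn V P) (X Y : Matrix (Fin d) (Fin d) ℝ) :
    frobInner (P X) (P Y) = frobInner X (P Y) := by
  rw [hP.2.2 X (P Y), hP.2.1 (P Y) (hP.1 Y)]

lemma proj_norm_le (hP : IsOrthProjOn V P) (X : Matrix (Fin d) (Fin d) ℝ) :
    frobNorm (P X) ≤ frobNorm X := by
  have h1 : frobNorm (P X) ^ 2 = frobInner X (P X) := by
    rw [frobNorm_sq, proj_inner hP]
  have h2 : frobInner X (P X) ≤ frobNorm X * frobNorm (P X) :=
    (abs_le.mp (abs_frobInner_le X (P X))).2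
  nlinarith [frobNorm_nonneg (P X), frobNorm_nonneg X]

lemma proj_eq_of (hP : IsOrthProjOn V P) (Z Z' : Matrix (Fin d) (Fin d) ℝ)
    (hZ' : Z' ∈ V) (h : ∀ Y ∈ V, frobInner (Z - Z') Y = 0) : P Z = Z' := by
  have hD : ∀ Y ∈ V, frobInner (P Z - Z') Y = 0 := by
    intro Y hY
    rw [frobInner_sub_left]
    have e1 : frobInner (P Z) Y = frobInner Z Y := by
      rw [hP.2.2 Z Y, hP.2.1 Y hY]
    have e2 : frobInner Z Y - frobInner Z' Y = 0 := by
      rw [← frobInner_sub_left]; exact h Y hY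
    linarith
  have hmem : P Z - Z' ∈ V := Submodule.sub_mem V (hP.1 Z) hZ'
  have h0 : frobInner (P Z - Z') (P Z - Z') = 0 := hD _ hmem
  have : P Z - Z' = 0 := by
    apply frobNorm_eq_zero; rw [frobNorm, h0, Real.sqrt_zero]
  rw [sub_eq_zero] at this; exact this

-- operator norm ≤ HS norm
lemma hsNorm_nonneg (T : Matrix (Fin d) (Fin d) ℝ →ₗ[ℝ] Matrix (Fin d) (Fin d) ℝ) :
    0 ≤ hsNorm T := Real.sqrt_nonneg _

lemma op_le_hs (T : Matrix (Fin d) (Fin d) ℝ →ₗ[ℝ] Matrix (Fin d) (Fin d) ℝ)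
    (X : Matrix (Fin d) (Fin d) ℝ) : frobNorm (T X) ≤ hsNorm T * frobNorm X := by
  classical
  set s : Finset (Fin d × Fin d) := Finset.univ ×ˢ Finset.univ with hs
  have hX : X = ∑ p ∈ s, (X p.1 p.2) • single p.1 p.2 (1:ℝ) := by
    rw [hs, Finset.sum_product]
    conv_lhs => rw [matrix_eq_sum_single X]
    exact Finset.sum_congr rfl fun i _ => Finset.sum_congr rfl fun j _ => by
      rw [smul_single, smul_eq_mul, mul_one]
  have key : phi (T X) = ∑ p ∈ s, (X p.1 p.2) • phi (T (single p.1 p.2 (1:ℝ))) := by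
    conv_lhs => rw [hX]
    rw [map_sum, map_sum]
    exact Finset.sum_congr rfl fun p _ => by rw [_root_.map_smul, _root_.map_smul]
  have step1 : ‖phi (T X)‖ ≤
      ∑ p ∈ s, |X p.1 p.2| * ‖phi (T (single p.1 p.2 (1:ℝ)))‖ := by
    rw [key]
    refine (norm_sum_le _ _).trans (le_of_eq ?_)
    exact Finset.sum_congr rfl fun p _ => by rw [norm_smul, Real.norm_eq_abs]
  have step2 : ∑ p ∈ s, |X p.1 p.2| * ‖phi (T (single p.1 p.2 (1:ℝ)))‖ ≤
      Real.sqrt (∑ p ∈ s, |X p.1 p.2| ^ 2) *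
      Real.sqrt (∑ p ∈ s, ‖phi (T (single p.1 p.2 (1:ℝ)))‖ ^ 2) :=
    Real.sum_mul_le_sqrt_mul_sqrt _ _ _
  have e1 : Real.sqrt (∑ p ∈ s, |X p.1 p.2| ^ 2) = frobNorm X := by
    rw [frobNorm, frobInner, hs, Finset.sum_product]
    congr 1
    exact Finset.sum_congr rfl fun i _ => Finset.sum_congr rfl fun j _ => by
      rw [sq_abs, pow_two]
  have e2 : Real.sqrt (∑ p ∈ s, ‖phi (T (single p.1 p.2 (1:ℝ)))‖ ^ 2)
      = hsNorm T := by
    rw [hsNorm, hs, Finset.sum_product]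
    congr 1
    exact Finset.sum_congr rfl fun i _ => Finset.sum_congr rfl fun j _ => by
      rw [frob_eq, real_inner_self_eq_norm_sq]
  rw [frobNorm_eq (T X)]
  calc ‖phi (T X)‖ ≤ _ := step1
    _ ≤ _ := step2
    _ = hsNorm T * frobNorm X := by rw [e1, e2, mul_comm]

end SAux

lemma offdiag_term_aux (x y c : ℝ) (hc : 0 ≤ c) :
    -((x ^ 2 / 2) * c + (y ^ 2 / 2) * c) ≤ x * (y * c) := by
  nlinarith [mul_nonneg (by nlinarith [sq_nonneg (x + y)] : (0:ℝ) ≤ x * y + (x ^ 2 + y ^ 2) / 2) hc]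


set_option maxHeartbeats 2000000 in
/-- lower bound for the smallest eigenvalue of a stationary point. -/
theorem stationary_point_smallest_eigenvalue_bound
    (d m : ℕ) (hd : 2 ≤ d) (hm : 0 < m)
    (w : Fin m → Fin d → ℝ) (hw : ∀ j, vnorm (w j) = 1)
    (Wh : Submodule ℝ (Matrix (Fin d) (Fin d) ℝ))
    (hWhsym : ∀ X ∈ Wh, X.IsSymm)
    (PW PWh : Matrix (Fin d) (Fin d) ℝ →ₗ[ℝ] Matrix (Fin d) (Fin d) ℝ)
    (hPW : IsOrthProjOn (Submodule.span ℝ (Set.range fun j => vecMulVec (w j) (w j))) PW)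
    (hPWh : IsOrthProjOn Wh PWh)
    (δ : ℝ) (hδ : δ = hsNorm (PW - PWh))
    (CF ν : ℝ)
    (hframe : ∀ x : Fin d → ℝ, ∑ j, (dotProduct x (w j)) ^ 2 ≤ CF * ∑ i, x i ^ 2)
    (hν : ν = CF - 1)
    (hδν : max δ ν < 1 / 4)
    (M : Matrix (Fin d) (Fin d) ℝ) (hM : M ∈ Wh) (hMS : frobNorm M = 1)
    (lam : Fin d → ℝ) (u : Fin d → Fin d → ℝ)
    (hmono : ∀ i j : Fin d, i ≤ j → lam j ≤ lam i)
    (horth : ∀ i j : Fin d, dotProduct (u i) (u j) = if i = j then 1 else 0)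
    (heig : ∀ i, M.mulVec (u i) = lam i • u i)
    (hA1 : lam ⟨0, by omega⟩ = specNorm M)
    (hA2 : lam ⟨0, by omega⟩ > lam ⟨1, by omega⟩)
    (hstat : ∀ X ∈ Wh,
      dotProduct (u ⟨0, by omega⟩) (X.mulVec (u ⟨0, by omega⟩)) =
        lam ⟨0, by omega⟩ * frobInner X M) :
    -2 * δ / lam ⟨0, by omega⟩ - 8 * δ - 4 * ν ≤ lam ⟨d - 1, by omega⟩ := by
  classical
  open SAux in
  have hd0 : 0 < d := by omega
  set i0 : Fin d := ⟨0, by omega⟩ with hi0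
  set i1 : Fin d := ⟨d - 1, by omega⟩ with hi1
  set u0 : Fin d → ℝ := u i0 with hu0
  set v0 : Fin d → ℝ := u i1 with hv0
  set L : ℝ := lam i0 with hL
  set U0 : Matrix (Fin d) (Fin d) ℝ := vecMulVec u0 u0 with hU0
  set V0 : Matrix (Fin d) (Fin d) ℝ := vecMulVec v0 v0 with hV0
  set f : Fin m → Matrix (Fin d) (Fin d) ℝ := fun j => vecMulVec (w j) (w j) with hf
  set spanW := Submodule.span ℝ (Set.range f) with hspanW
  -- basic unit facts
  have h_u_unit : ∀ i, ∑ k, u i k ^ 2 = 1 := by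
    intro i
    have h2 : ∑ k, u i k * u i k = 1 := by simpa [dotProduct] using horth i i
    rw [← h2]
    exact Finset.sum_congr rfl fun k _ => pow_two (u i k)
  have h_w_unit : ∀ j, ∑ k, w j k ^ 2 = 1 := by
    intro j
    have := hw j
    rw [vnorm] at this
    have hs : (0:ℝ) ≤ ∑ k, w j k ^ 2 := Finset.sum_nonneg fun k _ => sq_nonneg _
    rw [← Real.sq_sqrt hs, this]
    norm_num
  have h_w_dot : ∀ j, dotProduct (w j) (w j) = 1 := by
    intro j
    rw [dotProduct, ← h_w_unit j]
    exact Finset.sum_congr rfl fun k _ => (pow_two (w j k)).symm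
  have hδ0 : 0 ≤ δ := hδ ▸ hsNorm_nonneg _
  have hδ14 : δ < 1/4 := lt_of_le_of_lt (le_max_left δ ν) hδν
  have hν14 : ν < 1/4 := lt_of_le_of_lt (le_max_right δ ν) hδν
  have hν0 : 0 ≤ ν := by
    have h0 := hframe (w ⟨0, hm⟩)
    have h1 : (1:ℝ) ≤ ∑ j, (dotProduct (w ⟨0, hm⟩) (w j)) ^ 2 := by
      have : (dotProduct (w ⟨0, hm⟩) (w ⟨0, hm⟩)) ^ 2 = 1 := by rw [h_w_dot]; norm_num
      calc (1:ℝ) = (dotProduct (w ⟨0, hm⟩) (w ⟨0, hm⟩)) ^ 2 := this.symm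
        _ ≤ _ := Finset.single_le_sum (f := fun k => (dotProduct (w ⟨0, hm⟩) (w k)) ^ 2)
            (fun k _ => sq_nonneg _) (Finset.mem_univ _)
    rw [h_w_unit] at h0
    rw [hν]; linarith only [h0, h1]
  have hquad : ∀ i, dotProduct (u i) (M.mulVec (u i)) = lam i := by
    intro i
    rw [heig i, dotProduct_smul, smul_eq_mul, horth i i, if_pos rfl, mul_one]
  -- spectral norm facts
  have hUnorm : frobNorm U0 = 1 := frobNorm_vecMulVec_self (h_u_unit i0)
  have hVnorm : frobNorm V0 = 1 := frobNorm_vecMulVec_self (h_u_unit i1)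
  have hbdd : ∀ r ∈ {r : ℝ | ∃ v : Fin d → ℝ, (∑ i, v i ^ 2) = 1 ∧
      r = |dotProduct v (M.mulVec v)|}, r ≤ 1 := by
    rintro r ⟨v, hv1, rfl⟩
    have h1 : dotProduct v (M.mulVec v) = frobInner (vecMulVec v v) M :=
      (frobInner_vecMulVec_left v M).symm
    rw [h1]
    calc |frobInner (vecMulVec v v) M| ≤ frobNorm (vecMulVec v v) * frobNorm M :=
        abs_frobInner_le _ _
      _ = 1 := by rw [frobNorm_vecMulVec_self hv1, hMS, mul_one]
  have hBdd : BddAbove {r : ℝ | ∃ v : Fin d → ℝ, (∑ i, v i ^ 2) = 1 ∧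
      r = |dotProduct v (M.mulVec v)|} := ⟨1, hbdd⟩
  have hmem : ∀ i : Fin d, |lam i| ∈ {r : ℝ | ∃ v : Fin d → ℝ, (∑ i, v i ^ 2) = 1 ∧
      r = |dotProduct v (M.mulVec v)|} := fun i => ⟨u i, h_u_unit i, by rw [hquad i]⟩
  have habs : ∀ i, |lam i| ≤ L := by
    intro i
    exact le_of_le_of_eq (le_csSup hBdd (hmem i)) hA1.symm
  have hL_le_1 : L ≤ 1 := by
    exact hA1.trans_le (csSup_le ⟨|lam i0|, hmem i0⟩ hbdd)
  have hLpos : 0 < L := by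
    rcases lt_or_eq_of_le (le_trans (abs_nonneg _) (habs i0)) with h | h
    · exact h
    -- L = 0: derive contradiction
    exfalso
    have hspec0 : specNorm M = 0 := hA1.symm.trans h.symm
    have hq0unit : ∀ v : Fin d → ℝ, (∑ i, v i ^ 2) = 1 → dotProduct v (M.mulVec v) = 0 := by
      intro v hv
      have h1 : |dotProduct v (M.mulVec v)| ≤ specNorm M :=
        le_csSup hBdd ⟨v, hv, rfl⟩
      rw [hspec0] at h1
      exact abs_eq_zero.mp (le_antisymm h1 (abs_nonneg _))
    have hq0 : ∀ x : Fin d → ℝ, dotProduct x (M.mulVec x) = 0 := by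
      intro x
      by_cases hx : ∑ i, x i ^ 2 = 0
      · have hx0 : x = 0 := by
          funext i
          have := (Finset.sum_eq_zero_iff_of_nonneg
            (fun k (_ : k ∈ Finset.univ) => sq_nonneg (x k))).mp hx i (Finset.mem_univ i)
          exact (pow_eq_zero_iff two_ne_zero).mp this
        rw [hx0]; simp [dotProduct]
      · have hc : 0 < ∑ i, x i ^ 2 :=
          lt_of_le_of_ne (Finset.sum_nonneg fun k _ => sq_nonneg _) (Ne.symm hx)
        set c := Real.sqrt (∑ i, x i ^ 2) with hcdef
        have hcpos : 0 < c := Real.sqrt_pos.mpr hc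
        have hcsq : c ^ 2 = ∑ i, x i ^ 2 := Real.sq_sqrt hc.le
        have hv : ∑ i, (c⁻¹ • x) i ^ 2 = 1 := by
          simp only [Pi.smul_apply, smul_eq_mul, mul_pow, ← Finset.mul_sum]
          rw [← hcsq]
          field_simp
        have := hq0unit (c⁻¹ • x) hv
        rw [mulVec_smul, dotProduct_smul, smul_dotProduct] at this
        have hcne : c⁻¹ ≠ 0 := inv_ne_zero hcpos.ne'
        simp only [smul_eq_mul] at this
        rcases mul_eq_zero.mp this with h' | h'
        · exact absurd h' hcne
        rcases mul_eq_zero.mp h' with h'' | h''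
        · exact absurd h'' hcne
        exact h''
    -- polarization: M = 0
    have hsym := hWhsym M hM
    have hentry : ∀ i j, M i j = 0 := by
      intro i j
      have e1 : dotProduct (Pi.single i 1 : Fin d → ℝ)
          (M.mulVec (Pi.single j 1)) = M i j := by
        simp [dotProduct, mulVec, Pi.single_apply, Finset.mul_sum, mul_ite, ite_mul]
      by_cases hij : i = j
      · rw [← e1, hij]; exact hq0 _
      · have e2 : dotProduct (Pi.single j 1 : Fin d → ℝ)
            (M.mulVec (Pi.single i 1)) = M j i := by
          simp [dotProduct, mulVec, Pi.single_apply, Finset.mul_sum, mul_ite, ite_mul]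
        have hsum := hq0 ((Pi.single i 1 : Fin d → ℝ) + Pi.single j 1)
        rw [mulVec_add, dotProduct_add, add_dotProduct, add_dotProduct] at hsum
        have hii := hq0 (Pi.single i 1 : Fin d → ℝ)
        have hjj := hq0 (Pi.single j 1 : Fin d → ℝ)
        have hsymij : M j i = M i j := hsym.apply i j
        rw [e1, e2] at hsum
        -- hsum : q(ei) + M j i + (M i j + q(ej)) = 0  (roughly)
        have : M i j = 0 := by linarith only [hsum, hii, hjj, hsymij]
        exact this
    have : M = 0 := by ext i j; exact hentry i j
    rw [this] at hMS
    have : frobNorm (0 : Matrix (Fin d) (Fin d) ℝ) = 0 := by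
      simp [frobNorm, frobInner]
    rw [this] at hMS
    norm_num at hMS
  -- stationarity: PWh U0 = L • M
  have hPU : PWh U0 = L • M := by
    refine proj_eq_of hPWh U0 (L • M) (Submodule.smul_mem Wh L hM) ?_
    intro Y hY
    rw [frobInner_sub_left, frobInner_smul_left]
    rw [frobInner_vecMulVec_left u0 Y, hstat Y hY, frobInner_comm Y M]
    ring
  -- coefficients of PW U0 in the w-frame
  have hmemA : PW U0 ∈ Submodule.span ℝ (Set.range f) := by
    rw [← hspanW]; exact hPW.1 U0
  rw [Submodule.mem_span_range_iff_exists_fun] at hmemA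
  obtain ⟨a, hA⟩ := hmemA
  set g : Fin m → Fin m → ℝ := fun j k => (dotProduct (w j) (w k)) ^ 2 with hg
  have hgsym : ∀ j k, g j k = g k j := by
    intro j k; simp only [hg]; rw [dotProduct_comm]
  have hgnn : ∀ j k, (0:ℝ) ≤ g j k := fun j k => sq_nonneg _
  have hgjj : ∀ j, g j j = 1 := by
    intro j; simp only [hg]; rw [h_w_dot]; norm_num
  have hCF : CF = 1 + ν := by rw [hν]; ring
  have hrow : ∀ j, ∑ k, g j k ≤ 1 + ν := by
    intro j
    have h0 := hframe (w j)
    rw [h_w_unit j, mul_one] at h0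
    rw [← hCF]; exact h0
  have hrow_erase : ∀ j, ∑ k ∈ Finset.univ.erase j, g j k ≤ ν := by
    intro j
    have e := Finset.sum_erase_add Finset.univ (g j) (Finset.mem_univ j)
    rw [hgjj] at e
    have := hrow j
    linarith only [e, this]
  have hfmem : ∀ j, f j ∈ Submodule.span ℝ (Set.range f) :=
    fun j => Submodule.subset_span (Set.mem_range_self j)
  have hexp : ∀ j, frobInner (PW U0) (f j) = ∑ k, a k * g k j := by
    intro j
    conv_lhs => rw [← hA]
    rw [frobInner_sum_left]
    refine Finset.sum_congr rfl fun k _ => ?_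
    rw [frobInner_smul_left]
    congr 1
    simp only [hf, hg]
    exact frobInner_vecMulVec_vecMulVec (w k) (w j)
  have hb : ∀ j, ∑ k, a k * g k j = (dotProduct (w j) u0) ^ 2 := by
    intro j
    rw [← hexp j, hPW.2.2 U0 (f j), hPW.2.1 (f j) (by rw [hspanW]; exact hfmem j),
      frobInner_comm]
    simp only [hf, hU0]
    exact frobInner_vecMulVec_vecMulVec (w j) u0
  have hbnn : ∀ j, (0:ℝ) ≤ ∑ k, a k * g k j := fun j => (hb j) ▸ sq_nonneg _
  clear_value g
  -- ℓ2 bound on coefficients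
  set α := Real.sqrt (∑ k, a k ^ 2) with hαdef
  have hα0 : 0 ≤ α := Real.sqrt_nonneg _
  have hαsq : α ^ 2 = ∑ k, a k ^ 2 :=
    Real.sq_sqrt (Finset.sum_nonneg fun k _ => sq_nonneg _)
  have h_ak : ∀ k, |a k| ≤ α := by
    intro k
    rw [hαdef, ← Real.sqrt_sq_eq_abs]
    exact Real.sqrt_le_sqrt (Finset.single_le_sum (f := fun k => a k ^ 2)
      (fun k _ => sq_nonneg _) (Finset.mem_univ k))
  clear_value α u0 v0 U0 V0 L i0 i1 f spanW
  -- (P1): each coefficient is ≥ -να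
  have hlow : ∀ j, -(ν * α) ≤ a j := by
    intro j
    have e := Finset.sum_erase_add Finset.univ (fun k => a k * g k j) (Finset.mem_univ j)
    simp only [hgjj, mul_one] at e
    have hbound : ∑ k ∈ Finset.univ.erase j, a k * g k j ≤ ν * α := by
      calc ∑ k ∈ Finset.univ.erase j, a k * g k j
          ≤ ∑ k ∈ Finset.univ.erase j, α * g k j := by
            refine Finset.sum_le_sum fun k _ => ?_
            exact mul_le_mul_of_nonneg_right ((le_abs_self _).trans (h_ak k)) (hgnn k j)
        _ = α * ∑ k ∈ Finset.univ.erase j, g j k := by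
            rw [Finset.mul_sum]
            exact Finset.sum_congr rfl fun k _ => by rw [hgsym k j]
        _ ≤ α * ν := mul_le_mul_of_nonneg_left (hrow_erase j) hα0
        _ = ν * α := mul_comm _ _
    have := hbnn j
    linarith only [e, hbound, this]
  -- (P2): (1-ν) * ∑ a² ≤ ‖PW U0‖²
  have hAA : frobNorm (PW U0) ^ 2 = ∑ j, a j * ∑ k, a k * g k j := by
    rw [frobNorm_sq]
    conv_lhs => rw [← hA]
    rw [frobInner_sum_left]
    refine Finset.sum_congr rfl fun j _ => ?_
    rw [frobInner_smul_left, frobInner_comm (f j), hA, hexp j]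
  have hP2 : (1 - ν) * (∑ k, a k ^ 2) ≤ frobNorm (PW U0) ^ 2 := by
    rw [hAA]
    have split : ∀ j, a j * ∑ k, a k * g k j
        = a j ^ 2 + ∑ k ∈ Finset.univ.erase j, a j * (a k * g k j) := by
      intro j
      have e := Finset.sum_erase_add Finset.univ (fun k => a k * g k j) (Finset.mem_univ j)
      simp only [hgjj, mul_one] at e
      rw [← e, mul_add, Finset.mul_sum]
      ring
    have hterm : ∀ j, ∀ k, -((a j ^ 2 / 2) * g k j + (a k ^ 2 / 2) * g k j)
        ≤ a j * (a k * g k j) :=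
      fun j k => offdiag_term_aux (a j) (a k) (g k j) (hgnn k j)
    have hS1 : ∑ j, ∑ k ∈ Finset.univ.erase j, (a j ^ 2 / 2) * g k j
        ≤ (ν / 2) * ∑ k, a k ^ 2 := by
      rw [Finset.mul_sum]
      refine Finset.sum_le_sum fun j _ => ?_
      calc ∑ k ∈ Finset.univ.erase j, (a j ^ 2 / 2) * g k j
          = (a j ^ 2 / 2) * ∑ k ∈ Finset.univ.erase j, g j k := by
            rw [Finset.mul_sum]
            exact Finset.sum_congr rfl fun k _ => by rw [hgsym k j]
        _ ≤ (a j ^ 2 / 2) * ν :=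
            mul_le_mul_of_nonneg_left (hrow_erase j) (by positivity)
        _ = ν / 2 * a j ^ 2 := by ring
    have hS2 : ∑ j, ∑ k ∈ Finset.univ.erase j, (a k ^ 2 / 2) * g k j
        ≤ (ν / 2) * ∑ k, a k ^ 2 := by
      have e1 : ∀ j, ∑ k ∈ Finset.univ.erase j, (a k ^ 2 / 2) * g k j
          = (∑ k, (a k ^ 2 / 2) * g k j) - a j ^ 2 / 2 := by
        intro j
        have e := Finset.sum_erase_add Finset.univ (fun k => (a k ^ 2 / 2) * g k j)
          (Finset.mem_univ j)
        simp only [hgjj, mul_one] at e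
        linarith only [e]
      calc ∑ j, ∑ k ∈ Finset.univ.erase j, (a k ^ 2 / 2) * g k j
          = (∑ j, ∑ k, (a k ^ 2 / 2) * g k j) - ∑ j, a j ^ 2 / 2 := by
            rw [← Finset.sum_sub_distrib]
            exact Finset.sum_congr rfl fun j _ => e1 j
        _ = (∑ k, (a k ^ 2 / 2) * ∑ j, g k j) - ∑ j, a j ^ 2 / 2 := by
            rw [Finset.sum_comm]
            congr 1
            exact Finset.sum_congr rfl fun k _ => by rw [Finset.mul_sum]
        _ ≤ (∑ k, (a k ^ 2 / 2) * (1 + ν)) - ∑ j, a j ^ 2 / 2 := by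
            refine sub_le_sub_right (Finset.sum_le_sum fun k _ => ?_) _
            exact mul_le_mul_of_nonneg_left (hrow k) (by positivity)
        _ = (ν / 2) * ∑ k, a k ^ 2 := by
            rw [Finset.mul_sum, ← Finset.sum_sub_distrib]
            exact Finset.sum_congr rfl fun k _ => by ring
    have hDlow : -(ν * ∑ k, a k ^ 2)
        ≤ ∑ j, ∑ k ∈ Finset.univ.erase j, a j * (a k * g k j) := by
      have step : ∑ j, ∑ k ∈ Finset.univ.erase j,
          (-((a j ^ 2 / 2) * g k j + (a k ^ 2 / 2) * g k j))
          ≤ ∑ j, ∑ k ∈ Finset.univ.erase j, a j * (a k * g k j) :=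
        Finset.sum_le_sum fun j _ => Finset.sum_le_sum fun k _ => hterm j k
      have eneg : ∑ j, ∑ k ∈ Finset.univ.erase j,
          (-((a j ^ 2 / 2) * g k j + (a k ^ 2 / 2) * g k j))
          = -(∑ j, ∑ k ∈ Finset.univ.erase j, (a j ^ 2 / 2) * g k j)
            - ∑ j, ∑ k ∈ Finset.univ.erase j, (a k ^ 2 / 2) * g k j := by
        rw [← Finset.sum_neg_distrib, ← Finset.sum_sub_distrib]
        refine Finset.sum_congr rfl fun j _ => ?_
        rw [← Finset.sum_neg_distrib, ← Finset.sum_sub_distrib]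
        exact Finset.sum_congr rfl fun k _ => by ring
      linarith only [hS1, hS2, step, eneg.le, eneg.ge]
    calc (1 - ν) * (∑ k, a k ^ 2)
        = ∑ j, a j ^ 2 - ν * ∑ k, a k ^ 2 := by
          rw [Finset.mul_sum, Finset.mul_sum, ← Finset.sum_sub_distrib]
          exact Finset.sum_congr rfl fun j _ => by ring
      _ ≤ ∑ j, a j ^ 2 + ∑ j, ∑ k ∈ Finset.univ.erase j, a j * (a k * g k j) := by
          linarith only [hDlow]
      _ = ∑ j, a j * ∑ k, a k * g k j := by
          rw [← Finset.sum_add_distrib]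
          exact Finset.sum_congr rfl fun j _ => (split j).symm
  -- (P3): ‖PW U0‖ ≤ L + δ
  have hTU : frobNorm ((PW - PWh) U0) ≤ δ := by
    have h0 := op_le_hs (PW - PWh) U0
    rw [hUnorm, mul_one] at h0
    rw [hδ]; exact h0
  have hTV : frobNorm ((PW - PWh) V0) ≤ δ := by
    have h0 := op_le_hs (PW - PWh) V0
    rw [hVnorm, mul_one] at h0
    rw [hδ]; exact h0
  have hdecompA : PW U0 = L • M + (PW - PWh) U0 := by
    rw [LinearMap.sub_apply, hPU]
    abel
  have hA_le : frobNorm (PW U0) ≤ L + δ := by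
    rw [hdecompA]
    refine (frobNorm_add_le _ _).trans ?_
    have : frobNorm (L • M) = L := by
      rw [frobNorm_smul, hMS, mul_one, abs_of_pos hLpos]
    linarith only [hTU, this.le, this.ge]
  -- chain identities
  have hE1 : frobInner V0 (PWh U0) = L * lam i1 := by
    rw [hPU, frobInner_smul_right]
    congr 1
    rw [hV0, hv0, frobInner_vecMulVec_left, hquad i1]
  have hE2 : frobInner (PWh V0) (PWh U0) = frobInner V0 (PWh U0) := proj_inner hPWh V0 U0
  have hE3 : frobInner (PW V0) (PW U0) = frobInner V0 (PW U0) := proj_inner hPW V0 U0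
  have hdecomp : frobInner (PWh V0) (PWh U0) = frobInner (PW V0) (PW U0)
      - frobInner ((PW - PWh) V0) (PWh U0) - frobInner (PW V0) ((PW - PWh) U0) := by
    simp only [LinearMap.sub_apply, frobInner_sub_left, frobInner_sub_right]
    ring
  have hPWhU : frobNorm (PWh U0) ≤ 1 := le_of_le_of_eq (proj_norm_le hPWh U0) hUnorm
  have hPWV : frobNorm (PW V0) ≤ 1 := le_of_le_of_eq (proj_norm_le hPW V0) hVnorm
  have hb1 : |frobInner ((PW - PWh) V0) (PWh U0)| ≤ δ := by
    refine (abs_frobInner_le _ _).trans ?_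
    calc frobNorm ((PW - PWh) V0) * frobNorm (PWh U0) ≤ δ * 1 :=
        mul_le_mul hTV hPWhU (frobNorm_nonneg _) hδ0
      _ = δ := mul_one δ
  have hb2 : |frobInner (PW V0) ((PW - PWh) U0)| ≤ δ := by
    refine (abs_frobInner_le _ _).trans ?_
    calc frobNorm (PW V0) * frobNorm ((PW - PWh) U0) ≤ 1 * δ :=
        mul_le_mul hPWV hTU (frobNorm_nonneg _) zero_le_one
      _ = δ := one_mul δ
  have hmain : -(2*δ) + frobInner V0 (PW U0) ≤ L * lam i1 := by
    have e := hdecomp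
    rw [hE2, hE1, hE3] at e
    linarith only [e, (abs_le.mp hb1).1, (abs_le.mp hb1).2, (abs_le.mp hb2).1, (abs_le.mp hb2).2]
  -- lower bound on frobInner V0 (PW U0)
  have hVA : frobInner V0 (PW U0) = ∑ j, a j * (dotProduct v0 (w j)) ^ 2 := by
    conv_lhs => rw [← hA]
    rw [frobInner_comm, frobInner_sum_left]
    refine Finset.sum_congr rfl fun j _ => ?_
    rw [frobInner_smul_left]
    congr 1
    rw [hf, hV0]
    rw [frobInner_vecMulVec_vecMulVec (w j) v0, dotProduct_comm]
  have hsumc : ∑ j, (dotProduct v0 (w j)) ^ 2 ≤ CF := by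
    rw [hv0]
    have h0 := hframe (u i1)
    rw [h_u_unit i1, mul_one] at h0
    exact h0
  have hcnn : ∀ j, (0:ℝ) ≤ (dotProduct v0 (w j)) ^ 2 := fun j => sq_nonneg _
  have hVAlb : -(ν * α * CF) ≤ frobInner V0 (PW U0) := by
    rw [hVA]
    have step1 : ∑ j, (-(ν * α)) * (dotProduct v0 (w j)) ^ 2
        ≤ ∑ j, a j * (dotProduct v0 (w j)) ^ 2 :=
      Finset.sum_le_sum fun j _ => mul_le_mul_of_nonneg_right (hlow j) (hcnn j)
    have e : ∑ j, (-(ν * α)) * (dotProduct v0 (w j)) ^ 2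
        = -(ν * α) * ∑ j, (dotProduct v0 (w j)) ^ 2 := (Finset.mul_sum _ _ _).symm
    have hνα : 0 ≤ ν * α := mul_nonneg hν0 hα0
    have : -(ν * α * CF) ≤ -(ν * α) * ∑ j, (dotProduct v0 (w j)) ^ 2 := by
      have h1 := mul_le_mul_of_nonneg_left hsumc hνα
      linarith only [h1]
    linarith only [step1, e.le, e.ge, this]
  have hcore : -(2*δ) - ν * α * CF ≤ L * lam i1 := by linarith only [hmain, hVAlb]
  -- final case analysis
  rcases le_or_gt (L ^ 2) (2 * δ) with hcase | hcase
  · -- small L: use λ_min ≥ -L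
    have h1 : -L ≤ lam i1 := by
      linarith only [habs i1, neg_abs_le (lam i1)]
    have h2 : L ≤ 2 * δ / L := by
      rw [le_div_iff₀ hLpos]
      have e : L * L = L ^ 2 := by ring
      linarith only [e, hcase]
    have h3 : -2 * δ / L = -(2 * δ / L) := by ring
    rw [h3]
    linarith only [h1, h2, hδ0, hν0]
  · -- main case
    have hL2L : L ^ 2 ≤ L := by
      have e : 0 ≤ L * (1 - L) := mul_nonneg hLpos.le (by linarith only [hL_le_1])
      have e2 : L * (1 - L) = L - L ^ 2 := by ring
      linarith only [e, e2]
    have hδL : δ ≤ L / 2 := by linarith only [hcase, hL2L]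
    have hα2L : α ≤ 2 * L := by
      have h1 : frobNorm (PW U0) ^ 2 ≤ (L + δ) ^ 2 :=
        pow_le_pow_left₀ (frobNorm_nonneg _) hA_le 2
      have h2 : (1 - ν) * α ^ 2 ≤ (L + δ) ^ 2 := by
        rw [hαsq]; linarith only [hP2, h1]
      have hprod : 0 ≤ (1/4 - ν) * α ^ 2 :=
        mul_nonneg (by linarith only [hν14]) (sq_nonneg α)
      have e1 : (3/4) * α ^ 2 ≤ (L + δ) ^ 2 := by linarith only [h2, hprod]
      have e2 : (L + δ) ^ 2 ≤ (3/2 * L) ^ 2 :=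
        pow_le_pow_left₀ (by linarith only [hδ0, hLpos]) (by linarith only [hδL]) 2
      have e3 : α ^ 2 ≤ (2 * L) ^ 2 := by
        have := sq_nonneg L
        linarith only [e1, e2, this]
      calc α = Real.sqrt (α ^ 2) := (Real.sqrt_sq hα0).symm
        _ ≤ Real.sqrt ((2 * L) ^ 2) := Real.sqrt_le_sqrt e3
        _ = 2 * L := Real.sqrt_sq (by linarith only [hLpos])
    have herr : ν * α * CF ≤ 4 * (ν * L) := by
      have e1 : ν * α ≤ ν * (2 * L) := mul_le_mul_of_nonneg_left hα2L hν0
      have e2 : ν * α * CF ≤ (ν * (2 * L)) * (5/4) := by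
        refine mul_le_mul e1 (by rw [hCF]; linarith) (by rw [hCF]; linarith) ?_
        positivity
      linarith only [e2, mul_nonneg hν0 hLpos.le]
    have hcore2 : -(2*δ) - 4 * (ν * L) ≤ L * lam i1 := by linarith only [hcore, herr]
    have key : -2 * δ / L - 4 * ν ≤ lam i1 := by
      have e : -2 * δ / L - 4 * ν = (-(2*δ) - 4 * (ν * L)) / L := by
        field_simp
      rw [e, div_le_iff₀ hLpos]
      linarith only [hcore2, mul_comm L (lam i1)]
    linarith only [key, hδ0]
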